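/- Let F : ℝ^d → ℝ^d be L-Lipschitz and monotone, z₀ ∈ ℝ^d deterministic, and let (ξ_{k/2})_{k≥0} be mutually independent ℝ^d-valued random variables with E[ξ_{k/2}] = 0 and E[‖ξ_{k/2}‖²] = σ_{k/2}² < ∞. Let {α_k}_{k≥0} and {β_k}_{k≥0} satisfy α₀ > 0, α_k ∈ (0, 1/L] for k ≥ 1, β₀ = 1, β_k ∈ (0,1) for k ≥ 1, and ((1−β_{k+1})α_{k+1})/(2β_{k+1}) ≤ α_k/(2β_k) for all k ≥ 0, and generate z_{k+1/2} = z_k + β_k(z₀ − z_k) − (1−β_k)α_k(F z_k + ξ_k), z_{k+1} = z_k + β_k(z₀ − z_k) − α_k(F z_{k+1/2} + ξ_{k+1/2}). Define b₁ = 1, b_{k+1} = b_k/(1−β_k), a_k = b_k(1−β_k)α_k/(2β_k) for k ≥ 1, and V_k = a_k‖F z_k‖² − b_k⟨F z_k, z₀ − z_k⟩. Then for all k ≥ 1, E[V_k] − E[V_{k+1}] ≥ −(b_k α_k (1 + 2Lα_k)/(2β_k)) · ((1−β_k)σ_k² + σ_{k+1/2}²/(1−β_k)). -/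

import Mathlib

set_option maxHeartbeats 1000000
set_option linter.unusedSectionVars false

open MeasureTheory ProbabilityTheory
open scoped RealInnerProductSpace

section SfegSupport

variable {d : ℕ} {Ω : Type*} [MeasurableSpace Ω] {μ : MeasureTheory.Measure Ω}

/-- `f` is a measurable function of the noises `ξ 0, …, ξ (n-1)`. -/
def SfegNoiseRep (ξ : ℕ → Ω → EuclideanSpace ℝ (Fin d)) (n : ℕ)
    (f : Ω → EuclideanSpace ℝ (Fin d)) : Prop :=
  ∃ φ : (Fin n → EuclideanSpace ℝ (Fin d)) → EuclideanSpace ℝ (Fin d),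
    Measurable φ ∧ ∀ ω, f ω = φ (fun i => ξ i ω)

namespace SfegNoiseRep

variable {ξ : ℕ → Ω → EuclideanSpace ℝ (Fin d)} {n m : ℕ}
  {f g : Ω → EuclideanSpace ℝ (Fin d)}

theorem congr' (hf : SfegNoiseRep ξ n f) (h : ∀ ω, g ω = f ω) : SfegNoiseRep ξ n g := by
  obtain ⟨φ, hφ, he⟩ := hf
  exact ⟨φ, hφ, fun ω => (h ω).trans (he ω)⟩

theorem mono (hf : SfegNoiseRep ξ n f) (hnm : n ≤ m) : SfegNoiseRep ξ m f := by
  obtain ⟨φ, hφ, he⟩ := hf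
  refine ⟨fun v => φ (fun i => v (Fin.castLE hnm i)),
    hφ.comp (measurable_pi_lambda _ (fun i => measurable_pi_apply _)), fun ω => ?_⟩
  simpa using he ω

theorem const (v : EuclideanSpace ℝ (Fin d)) : SfegNoiseRep ξ n (fun _ => v) :=
  ⟨fun _ => v, measurable_const, fun _ => rfl⟩

theorem add (hf : SfegNoiseRep ξ n f) (hg : SfegNoiseRep ξ n g) :
    SfegNoiseRep ξ n (fun ω => f ω + g ω) := by
  obtain ⟨φ, hφ, he⟩ := hf; obtain ⟨ψ, hψ, he'⟩ := hg
  exact ⟨fun v => φ v + ψ v, hφ.add hψ, fun ω => by show f ω + g ω = _; rw [he ω, he' ω]⟩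

theorem sub (hf : SfegNoiseRep ξ n f) (hg : SfegNoiseRep ξ n g) :
    SfegNoiseRep ξ n (fun ω => f ω - g ω) := by
  obtain ⟨φ, hφ, he⟩ := hf; obtain ⟨ψ, hψ, he'⟩ := hg
  exact ⟨fun v => φ v - ψ v, hφ.sub hψ, fun ω => by show f ω - g ω = _; rw [he ω, he' ω]⟩

theorem smul (c : ℝ) (hf : SfegNoiseRep ξ n f) :
    SfegNoiseRep ξ n (fun ω => c • f ω) := by
  obtain ⟨φ, hφ, he⟩ := hf
  exact ⟨fun v => c • φ v, hφ.const_smul c, fun ω => by show c • f ω = _; rw [he ω]⟩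

theorem comp (hf : SfegNoiseRep ξ n f) {F : EuclideanSpace ℝ (Fin d) → EuclideanSpace ℝ (Fin d)}
    (hF : Measurable F) : SfegNoiseRep ξ n (fun ω => F (f ω)) := by
  obtain ⟨φ, hφ, he⟩ := hf
  exact ⟨fun v => F (φ v), hF.comp hφ, fun ω => by show F (f ω) = _; rw [he ω]⟩

theorem noise (k : ℕ) (hk : k < n) : SfegNoiseRep ξ n (ξ k) :=
  ⟨fun v => v ⟨k, hk⟩, measurable_pi_apply _, fun ω => rfl⟩

/-- A function of the first `n` noises is independent of the `m`-th noise for `n ≤ m`. -/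
theorem indepFun (hf : SfegNoiseRep ξ n f)
    (hindep : iIndepFun ξ μ) (hmeas : ∀ i, Measurable (ξ i))
    (hnm : n ≤ m) : IndepFun f (ξ m) μ := by
  obtain ⟨φ, hφ, he⟩ := hf
  have hdisj : Disjoint (Finset.range n) ({m} : Finset ℕ) := by
    simp only [Finset.disjoint_singleton_right, Finset.mem_range]
    omega
  have h := hindep.indepFun_finset (Finset.range n) {m} hdisj hmeas
  have h2 := h.comp
    (φ := fun v => φ (fun i : Fin n => v ⟨(i : ℕ), Finset.mem_range.2 i.isLt⟩))
    (ψ := fun v => v ⟨m, Finset.mem_singleton_self m⟩)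
    (hφ.comp (measurable_pi_lambda _ (fun i => measurable_pi_apply _)))
    (measurable_pi_apply (X := fun _ : ({m} : Finset ℕ) => EuclideanSpace ℝ (Fin d)) _)
  have hfe : f = (fun v => φ (fun i : Fin n => v ⟨(i : ℕ), Finset.mem_range.2 i.isLt⟩)) ∘
      (fun a (i : (Finset.range n : Finset ℕ)) => ξ i a) := funext fun ω => he ω
  rw [hfe]
  exact h2

end SfegNoiseRep


theorem sfeg_integral_add7 {Ω : Type*} [MeasurableSpace Ω] {μ : MeasureTheory.Measure Ω}
    {f1 f2 f3 f4 f5 f6 f7 : Ω → ℝ}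
    (h1 : Integrable f1 μ) (h2 : Integrable f2 μ) (h3 : Integrable f3 μ)
    (h4 : Integrable f4 μ) (h5 : Integrable f5 μ) (h6 : Integrable f6 μ)
    (h7 : Integrable f7 μ) :
    ∫ ω, (f1 ω + f2 ω + f3 ω + f4 ω + f5 ω + f6 ω + f7 ω) ∂μ
      = (∫ ω, f1 ω ∂μ) + (∫ ω, f2 ω ∂μ) + (∫ ω, f3 ω ∂μ) + (∫ ω, f4 ω ∂μ)
        + (∫ ω, f5 ω ∂μ) + (∫ ω, f6 ω ∂μ) + (∫ ω, f7 ω ∂μ) := by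
  have s2 : Integrable (fun ω => f1 ω + f2 ω) μ := h1.add h2
  have s3 : Integrable (fun ω => f1 ω + f2 ω + f3 ω) μ := s2.add h3
  have s4 : Integrable (fun ω => f1 ω + f2 ω + f3 ω + f4 ω) μ := s3.add h4
  have s5 : Integrable (fun ω => f1 ω + f2 ω + f3 ω + f4 ω + f5 ω) μ := s4.add h5
  have s6 : Integrable (fun ω => f1 ω + f2 ω + f3 ω + f4 ω + f5 ω + f6 ω) μ := s5.add h6
  rw [integral_add s6 h7, integral_add s5 h6, integral_add s4 h5, integral_add s3 h4,
    integral_add s2 h3, integral_add h1 h2]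

/-- Two `L²` functions have integrable inner product. -/
theorem sfeg_integrable_inner {E : Type*} [NormedAddCommGroup E] [InnerProductSpace ℝ E]
    {f g : Ω → E} (hf : MemLp f 2 μ) (hg : MemLp g 2 μ) :
    Integrable (fun ω => ⟪f ω, g ω⟫) μ := by
  refine Integrable.mono' (((memLp_two_iff_integrable_sq_norm hf.1).1 hf).add
    ((memLp_two_iff_integrable_sq_norm hg.1).1 hg)) (hf.1.inner hg.1) ?_
  filter_upwards with ω
  show ‖⟪f ω, g ω⟫‖ ≤ ‖f ω‖^2 + ‖g ω‖^2
  have h1 : ‖⟪f ω, g ω⟫‖ ≤ ‖f ω‖ * ‖g ω‖ := norm_inner_le_norm _ _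
  have h2 : ‖f ω‖ * ‖g ω‖ ≤ ‖f ω‖^2 + ‖g ω‖^2 := by
    nlinarith [sq_nonneg (‖f ω‖ - ‖g ω‖), norm_nonneg (f ω), norm_nonneg (g ω)]
  linarith

/-- Expected inner product of independent `L²` vectors, one centered, vanishes. -/
theorem sfeg_integral_inner_eq_zero [IsProbabilityMeasure μ]
    {X Y : Ω → EuclideanSpace ℝ (Fin d)} (hXY : IndepFun X Y μ)
    (hX : MemLp X 2 μ) (hY : MemLp Y 2 μ) (hY0 : ∫ ω, Y ω ∂μ = 0) :
    ∫ ω, ⟪X ω, Y ω⟫ ∂μ = 0 := by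
  have hXi : ∀ i, MemLp (fun ω => X ω i) 2 μ := fun i => by
    have := (EuclideanSpace.proj (𝕜 := ℝ) i).comp_memLp' hX
    exact this
  have hYi : ∀ i, MemLp (fun ω => Y ω i) 2 μ := fun i => by
    have := (EuclideanSpace.proj (𝕜 := ℝ) i).comp_memLp' hY
    exact this
  have hIi : ∀ i, IndepFun (fun ω => X ω i) (fun ω => Y ω i) μ := fun i =>
    hXY.comp (EuclideanSpace.proj (𝕜 := ℝ) i).measurable
      (EuclideanSpace.proj (𝕜 := ℝ) i).measurable
  have hY0i : ∀ i, ∫ ω, Y ω i ∂μ = 0 := by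
    intro i
    have h := (EuclideanSpace.proj (𝕜 := ℝ) i).integral_comp_comm (hY.integrable one_le_two)
    rw [hY0] at h
    simpa using h
  have hmul : ∀ i, Integrable (fun ω => X ω i * Y ω i) μ := fun i =>
    (hIi i).integrable_mul ((hXi i).integrable one_le_two) ((hYi i).integrable one_le_two)
  calc ∫ ω, ⟪X ω, Y ω⟫ ∂μ = ∫ ω, ∑ i, X ω i * Y ω i ∂μ := by
        refine integral_congr_ae (Filter.Eventually.of_forall fun ω => ?_)
        simp [PiLp.inner_apply, RCLike.inner_apply, mul_comm]
    _ = ∑ i, ∫ ω, X ω i * Y ω i ∂μ := integral_finset_sum _ (fun i _ => hmul i)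
    _ = ∑ i, (∫ ω, X ω i ∂μ) * (∫ ω, Y ω i ∂μ) := by
        refine Finset.sum_congr rfl (fun i _ => ?_)
        exact ProbabilityTheory.IndepFun.integral_mul_eq_mul_integral (hIi i) ((hXi i).integrable one_le_two).aestronglyMeasurable
          ((hYi i).integrable one_le_two).aestronglyMeasurable
    _ = 0 := by simp [hY0i]

end SfegSupport

theorem sfeg_pointwise
    {H : Type*} [NormedAddCommGroup H] [InnerProductSpace ℝ H]
    (F : H → H) (L : ℝ)
    (hLip : ∀ x y : H, ‖F x - F y‖ ≤ L * ‖x - y‖)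
    (hMono : ∀ x y : H, (0:ℝ) ≤ ⟪F x - F y, x - y⟫)
    (αk βk aa aa' bb bb' : ℝ)
    (hαk : 0 < αk) (hLα : L * αk ≤ 1)
    (hβk : 0 < βk) (hβk1 : βk < 1) (hbb : 0 < bb)
    (hbb' : bb' = bb / (1 - βk))
    (haa : aa = bb * (1 - βk) * αk / (2 * βk))
    (haa' : aa' ≤ bb * αk / βk / (2 * (1 - βk)))
    (z0 zk w1 zk1 u u' : H)
    (hw1 : w1 = zk + βk • (z0 - zk) - ((1 - βk) * αk) • (F zk + u))
    (hzk1 : zk1 = zk + βk • (z0 - zk) - αk • (F w1 + u')) :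
    bb * αk / βk *
      ( (-(1/(2*(1-βk)))) * ‖(1-βk) • u - u'‖^2
        + (-(L*(1-βk)*αk)) * ‖u‖^2
        + (-(L*αk/(1-βk))) * ‖u'‖^2
        + (-(1-βk)) * ⟪F zk, u⟫
        + ⟪F (zk + βk • (z0 - zk) - ((1-βk)*αk) • F zk), u⟫
        + (-(1/(1-βk))) * ⟪F w1, u'⟫
        + (1/(1-βk)) * ⟪F (zk + βk • (z0 - zk) - αk • F w1), u'⟫ )
    ≤ (aa * ‖F zk‖^2 - bb * ⟪F zk, z0 - zk⟫)
      - (aa' * ‖F zk1‖^2 - bb' * ⟪F zk1, z0 - zk1⟫) := by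
  have hlam : 0 < 1 - βk := by linarith
  have hlam0 : (1 - βk) ≠ 0 := ne_of_gt hlam
  have hβ0 : βk ≠ 0 := ne_of_gt hβk
  set g := F zk with hg
  set h := F w1 with hh
  set g' := F zk1 with hg'
  set wb := zk + βk • (z0 - zk) - ((1-βk)*αk) • g with hwb
  set zb := zk + βk • (z0 - zk) - αk • h with hzb
  -- vector identities
  have hv1 : z0 - zk1 = (1-βk) • (z0 - zk) + αk • h + αk • u' := by
    rw [hzk1]; module
  have hv2 : βk • (z0 - zk) = (zk1 - zk) + αk • h + αk • u' := by
    rw [hzk1]; module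
  have hv3 : zk1 - w1 = αk • (((1-βk) • g - h) + ((1-βk) • u - u')) := by
    rw [hzk1, hw1]; module
  have hv4 : w1 - wb = -(((1-βk) * αk) • u) := by
    rw [hw1, hwb]; module
  have hv5 : zk1 - zb = -(αk • u') := by
    rw [hzk1, hzb]; module
  -- scalar identities
  have S1 : ⟪g', z0 - zk1⟫ = (1-βk) * ⟪g', z0 - zk⟫ + αk * ⟪g', h⟫ + αk * ⟪g', u'⟫ := by
    rw [hv1]; simp only [inner_add_right, real_inner_smul_right]
  have S2 : βk * (⟪g, z0 - zk⟫ - ⟪g', z0 - zk⟫)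
      = (⟪g, zk1 - zk⟫ - ⟪g', zk1 - zk⟫) + αk * (⟪g, h⟫ - ⟪g', h⟫)
        + αk * (⟪g, u'⟫ - ⟪g', u'⟫) := by
    have e : ⟪g - g', βk • (z0 - zk)⟫ = ⟪g - g', (zk1 - zk) + αk • h + αk • u'⟫ := by
      rw [hv2]
    simp only [inner_sub_left, inner_add_right, real_inner_smul_right] at e
    linear_combination e
  -- monotonicity
  have M : ⟪g, zk1 - zk⟫ - ⟪g', zk1 - zk⟫ ≤ 0 := by
    have hm := hMono zk zk1
    have e : ⟪F zk - F zk1, zk - zk1⟫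
        = -(⟪g, zk1 - zk⟫ - ⟪g', zk1 - zk⟫) := by
      rw [← hg, ← hg']
      simp only [inner_sub_left, inner_sub_right]
      ring
    rw [e] at hm; linarith
  -- Lipschitz at the extragradient step
  have hA2 : ‖g' - h‖ ≤ ‖((1-βk) • g - h) + ((1-βk) • u - u')‖ := by
    calc ‖g' - h‖ ≤ L * ‖zk1 - w1‖ := hLip zk1 w1
      _ = (L * αk) * ‖((1-βk) • g - h) + ((1-βk) • u - u')‖ := by
          rw [hv3, norm_smul, Real.norm_eq_abs, abs_of_pos hαk]; ring
      _ ≤ 1 * ‖((1-βk) • g - h) + ((1-βk) • u - u')‖ :=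
          mul_le_mul_of_nonneg_right hLα (norm_nonneg _)
      _ = _ := one_mul _
  have hA3 : ‖g' - h‖^2 ≤ ‖((1-βk) • g - h) + ((1-βk) • u - u')‖^2 :=
    pow_le_pow_left₀ (norm_nonneg _) hA2 2
  have hE1 : ‖((1-βk) • g - h) + ((1-βk) • u - u')‖^2
      = ‖(1-βk) • g - h‖^2 + 2*⟪(1-βk) • g - h, (1-βk) • u - u'⟫ + ‖(1-βk) • u - u'‖^2 :=
    norm_add_sq_real _ _
  have hE2 : ‖(1-βk) • g - h‖^2 = (1-βk)^2*‖g‖^2 - 2*(1-βk)*⟪g, h⟫ + ‖h‖^2 := by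
    rw [norm_sub_sq_real, norm_smul, real_inner_smul_left, Real.norm_eq_abs,
      abs_of_pos hlam, mul_pow]
    ring
  have hE3 : ⟪(1-βk) • g - h, (1-βk) • u - u'⟫
      = (1-βk)^2*⟪g, u⟫ - (1-βk)*⟪g, u'⟫ - (1-βk)*⟪h, u⟫ + ⟪h, u'⟫ := by
    simp only [inner_sub_left, inner_sub_right, real_inner_smul_left, real_inner_smul_right]
    ring
  have hE4 : ‖g' - h‖^2 = ‖g'‖^2 - 2*⟪g', h⟫ + ‖h‖^2 := norm_sub_sq_real _ _
  have A : 0 ≤ (1-βk)^2*‖g‖^2 - ‖g'‖^2 - 2*(1-βk)*⟪g, h⟫ + 2*⟪g', h⟫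
      + 2*(1-βk)^2*⟪g, u⟫ - 2*(1-βk)*⟪g, u'⟫ - 2*(1-βk)*⟪h, u⟫ + 2*⟪h, u'⟫
      + ‖(1-βk) • u - u'‖^2 := by linarith
  -- noise corrections via Lipschitz
  have C1 : -((L*((1-βk)*αk))*‖u‖^2) ≤ ⟪h, u⟫ - ⟪F wb, u⟫ := by
    have l1 : ‖h - F wb‖ ≤ L * ‖w1 - wb‖ := hLip w1 wb
    have l2 : ‖w1 - wb‖ = ((1-βk)*αk) * ‖u‖ := by
      rw [hv4, norm_neg, norm_smul, Real.norm_eq_abs, abs_of_pos (mul_pos hlam hαk)]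
    have l3 := abs_real_inner_le_norm (h - F wb) u
    have l4 : ‖h - F wb‖ * ‖u‖ ≤ (L * (((1-βk)*αk) * ‖u‖)) * ‖u‖ := by
      rw [l2] at l1
      exact mul_le_mul_of_nonneg_right l1 (norm_nonneg u)
    have e : ⟪h - F wb, u⟫ = ⟪h, u⟫ - ⟪F wb, u⟫ := inner_sub_left _ _ _
    have l5 := neg_abs_le ⟪h - F wb, u⟫
    have hsq : (L * (((1-βk)*αk) * ‖u‖)) * ‖u‖ = (L*((1-βk)*αk))*‖u‖^2 := by ring
    linarith
  have C2 : -((L*αk)*‖u'‖^2) ≤ ⟪g', u'⟫ - ⟪F zb, u'⟫ := by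
    have l1 : ‖g' - F zb‖ ≤ L * ‖zk1 - zb‖ := hLip zk1 zb
    have l2 : ‖zk1 - zb‖ = αk * ‖u'‖ := by
      rw [hv5, norm_neg, norm_smul, Real.norm_eq_abs, abs_of_pos hαk]
    have l3 := abs_real_inner_le_norm (g' - F zb) u'
    have l4 : ‖g' - F zb‖ * ‖u'‖ ≤ (L * (αk * ‖u'‖)) * ‖u'‖ := by
      rw [l2] at l1
      exact mul_le_mul_of_nonneg_right l1 (norm_nonneg u')
    have e : ⟪g' - F zb, u'⟫ = ⟪g', u'⟫ - ⟪F zb, u'⟫ := inner_sub_left _ _ _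
    have l5 := neg_abs_le ⟪g' - F zb, u'⟫
    have hsq : (L * (αk * ‖u'‖)) * ‖u'‖ = (L*αk)*‖u'‖^2 := by ring
    linarith
  have C1' := mul_le_mul_of_nonneg_left C1 (by positivity : (0:ℝ) ≤ 2*(1-βk))
  have C2' := mul_le_mul_of_nonneg_left C2 (by norm_num : (0:ℝ) ≤ 2)
  -- bracket inequality
  have bracket : -‖(1-βk) • u - u'‖^2 - 2*L*(1-βk)^2*αk*‖u‖^2 - 2*L*αk*‖u'‖^2
      - 2*(1-βk)^2*⟪g, u⟫ + 2*(1-βk)*⟪F wb, u⟫ - 2*⟪h, u'⟫ + 2*⟪F zb, u'⟫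
      ≤ (1-βk)^2*‖g‖^2 - ‖g'‖^2 - 2*(1-βk)*⟪g, h⟫ - 2*(1-βk)*⟪g, u'⟫
        + 2*⟪g', h⟫ + 2*⟪g', u'⟫ := by linarith [A, C1', C2']
  -- multiply out and conclude
  have p3 := mul_le_mul_of_nonneg_left bracket (by positivity : (0:ℝ) ≤ bb*αk)
  have p1 : (2*βk*(1-βk)*aa') * ‖g'‖^2 ≤ (bb*αk) * ‖g'‖^2 := by
    have t : 2*βk*(1-βk)*(bb*αk/βk/(2*(1-βk))) = bb*αk := by field_simp
    have := mul_le_mul_of_nonneg_left haa' (by positivity : (0:ℝ) ≤ 2*βk*(1-βk))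
    rw [t] at this
    exact mul_le_mul_of_nonneg_right (by linarith) (sq_nonneg _)
  have p2 : 2*(1-βk)*bb*(⟪g, zk1 - zk⟫ - ⟪g', zk1 - zk⟫) ≤ 0 := by
    have hcoef : (0:ℝ) ≤ 2*(1-βk)*bb := by positivity
    exact mul_nonpos_of_nonneg_of_nonpos hcoef M
  have e1 : 2*βk*(1-βk) * (bb * αk / βk *
      ( (-(1/(2*(1-βk)))) * ‖(1-βk) • u - u'‖^2
        + (-(L*(1-βk)*αk)) * ‖u‖^2
        + (-(L*αk/(1-βk))) * ‖u'‖^2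
        + (-(1-βk)) * ⟪g, u⟫
        + ⟪F wb, u⟫
        + (-(1/(1-βk))) * ⟪h, u'⟫
        + (1/(1-βk)) * ⟪F zb, u'⟫ ))
      = (bb*αk) * (-‖(1-βk) • u - u'‖^2 - 2*L*(1-βk)^2*αk*‖u‖^2 - 2*L*αk*‖u'‖^2
        - 2*(1-βk)^2*⟪g, u⟫ + 2*(1-βk)*⟪F wb, u⟫ - 2*⟪h, u'⟫ + 2*⟪F zb, u'⟫) := by
    field_simp
    ring
  have e2 : 2*βk*(1-βk) * ((aa * ‖g‖^2 - bb * ⟪g, z0 - zk⟫)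
        - (aa' * ‖g'‖^2 - bb' * ⟪g', z0 - zk1⟫))
      = (bb*αk) * ((1-βk)^2*‖g‖^2 - ‖g'‖^2 - 2*(1-βk)*⟪g, h⟫ - 2*(1-βk)*⟪g, u'⟫
          + 2*⟪g', h⟫ + 2*⟪g', u'⟫)
        + ((bb*αk) - 2*βk*(1-βk)*aa') * ‖g'‖^2
        - 2*(1-βk)*bb*(⟪g, zk1 - zk⟫ - ⟪g', zk1 - zk⟫) := by
    have haa2 : 2*βk*aa = bb*(1-βk)*αk := by rw [haa]; field_simp
    have hbb2 : bb'*(1-βk) = bb := by rw [hbb']; field_simp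
    linear_combination (2*βk*bb) * S1 - (2*(1-βk)*bb) * S2
      + ((1-βk)*‖g‖^2) * haa2 + (2*βk*⟪g', z0 - zk1⟫) * hbb2
  have hpos : (0:ℝ) < 2*βk*(1-βk) := by positivity
  have final : 2*βk*(1-βk) * (bb * αk / βk *
      ( (-(1/(2*(1-βk)))) * ‖(1-βk) • u - u'‖^2
        + (-(L*(1-βk)*αk)) * ‖u‖^2
        + (-(L*αk/(1-βk))) * ‖u'‖^2
        + (-(1-βk)) * ⟪g, u⟫
        + ⟪F wb, u⟫
        + (-(1/(1-βk))) * ⟪h, u'⟫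
        + (1/(1-βk)) * ⟪F zb, u'⟫ ))
      ≤ 2*βk*(1-βk) * ((aa * ‖g‖^2 - bb * ⟪g, z0 - zk⟫)
        - (aa' * ‖g'‖^2 - bb' * ⟪g', z0 - zk1⟫)) := by
    rw [e1, e2]; linarith
  exact le_of_mul_le_mul_left final hpos

/-- **Stochastic potential lemma for Class S-FEG** (Lemma A.1 of the paper),
inductive step.  The noise family is indexed by half-integers: `ξ (2*k)` is the
paper's `ξ_k` and `ξ (2*k+1)` is the paper's `ξ_{k+1/2}`; `σsq n` denotes the
variance `σ_{n/2}²`.  For every `k ≥ 1`,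
`E[V_k] - E[V_{k+1}] ≥ -(b_k α_k (1+2Lα_k)/(2β_k)) ((1-β_k)σ_k² + σ_{k+1/2}²/(1-β_k))`. -/
theorem sfeg_potential_lemma
    {d : ℕ} {Ω : Type*} [MeasurableSpace Ω] (μ : Measure Ω) [IsProbabilityMeasure μ]
    (L : ℝ) (hL : 0 < L)
    (F : EuclideanSpace ℝ (Fin d) → EuclideanSpace ℝ (Fin d))
    (hLip : ∀ z z' : EuclideanSpace ℝ (Fin d), ‖F z - F z'‖ ≤ L * ‖z - z'‖)
    (hMono : ∀ z z' : EuclideanSpace ℝ (Fin d), 0 ≤ ⟪F z - F z', z - z'⟫)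
    (z0 : EuclideanSpace ℝ (Fin d))
    (ξ : ℕ → Ω → EuclideanSpace ℝ (Fin d))
    (hmeas : ∀ n, Measurable (ξ n))
    (hindep : iIndepFun ξ μ)
    (hmean : ∀ n, ∫ ω, ξ n ω ∂μ = 0)
    (σsq : ℕ → ℝ)
    (hint : ∀ n, Integrable (fun ω => ‖ξ n ω‖ ^ 2) μ)
    (hvar : ∀ n, ∫ ω, ‖ξ n ω‖ ^ 2 ∂μ = σsq n)
    (α β : ℕ → ℝ)
    (hα0 : 0 < α 0)
    (hα : ∀ k : ℕ, 1 ≤ k → 0 < α k ∧ α k ≤ 1 / L)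
    (hβ0 : β 0 = 1)
    (hβ : ∀ k : ℕ, 1 ≤ k → β k ∈ Set.Ioo (0 : ℝ) 1)
    (hcoef : ∀ k : ℕ,
      (1 - β (k + 1)) * α (k + 1) / (2 * β (k + 1)) ≤ α k / (2 * β k))
    (z w : ℕ → Ω → EuclideanSpace ℝ (Fin d))
    (hz0 : ∀ ω, z 0 ω = z0)
    (hw : ∀ (k : ℕ) (ω : Ω), w k ω = z k ω + β k • (z0 - z k ω)
      - ((1 - β k) * α k) • (F (z k ω) + ξ (2 * k) ω))
    (hz : ∀ (k : ℕ) (ω : Ω), z (k + 1) ω = z k ω + β k • (z0 - z k ω)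
      - α k • (F (w k ω) + ξ (2 * k + 1) ω))
    (a b : ℕ → ℝ)
    (hb1 : b 1 = 1)
    (hb : ∀ k : ℕ, 1 ≤ k → b (k + 1) = b k / (1 - β k))
    (ha : ∀ k : ℕ, 1 ≤ k → a k = b k * (1 - β k) * α k / (2 * β k)) :
    ∀ k : ℕ, 1 ≤ k →
      -(b k * α k * (1 + 2 * L * α k) / (2 * β k))
          * ((1 - β k) * σsq (2 * k) + σsq (2 * k + 1) / (1 - β k))
        ≤ (∫ ω, (a k * ‖F (z k ω)‖ ^ 2 - b k * ⟪F (z k ω), z0 - z k ω⟫) ∂μ)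
          - (∫ ω, (a (k + 1) * ‖F (z (k + 1) ω)‖ ^ 2
              - b (k + 1) * ⟪F (z (k + 1) ω), z0 - z (k + 1) ω⟫) ∂μ) := by
  -- basic facts about `F`
  have hFcont : Continuous F := by
    have : LipschitzWith (Real.toNNReal L) F := by
      apply LipschitzWith.of_dist_le_mul
      intro x y
      rw [dist_eq_norm, dist_eq_norm, Real.coe_toNNReal L hL.le]
      exact hLip x y
    exact this.continuous
  have hFmeas : Measurable F := hFcont.measurable
  -- L² facts
  have hξ2 : ∀ n, MemLp (ξ n) 2 μ := fun n =>
    (memLp_two_iff_integrable_sq_norm (hmeas n).aestronglyMeasurable).2 (hint n)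
  have hFL2 : ∀ f : Ω → EuclideanSpace ℝ (Fin d), MemLp f 2 μ →
      MemLp (fun ω => F (f ω)) 2 μ := by
    intro f hf
    have hmF : AEStronglyMeasurable (fun ω => F (f ω)) μ :=
      hFcont.comp_aestronglyMeasurable hf.1
    refine MemLp.of_le ((hf.norm.const_mul L).add
      (memLp_const (‖F z0‖ + L * ‖z0‖))) hmF ?_
    filter_upwards with ω
    have h1 : ‖F (f ω) - F z0‖ ≤ L * ‖f ω - z0‖ := hLip _ _
    have h2 : ‖F (f ω)‖ - ‖F z0‖ ≤ ‖F (f ω) - F z0‖ := norm_sub_norm_le _ _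
    have h3 : ‖f ω - z0‖ ≤ ‖f ω‖ + ‖z0‖ := norm_sub_le _ _
    have h4 : L * ‖f ω - z0‖ ≤ L * (‖f ω‖ + ‖z0‖) :=
      mul_le_mul_of_nonneg_left h3 hL.le
    have h5 : ‖F (f ω)‖ ≤ L * ‖f ω‖ + (‖F z0‖ + L * ‖z0‖) := by
      nlinarith
    have h6 : L * ‖f ω‖ + (‖F z0‖ + L * ‖z0‖)
        ≤ ‖(L * ‖f ω‖ + (‖F z0‖ + L * ‖z0‖))‖ := le_abs_self _
    calc ‖F (f ω)‖ ≤ L * ‖f ω‖ + (‖F z0‖ + L * ‖z0‖) := h5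
      _ ≤ _ := h6
  have hzw2 : ∀ m, MemLp (z m) 2 μ ∧ MemLp (w m) 2 μ := by
    have hwstep : ∀ m, MemLp (z m) 2 μ → MemLp (w m) 2 μ := by
      intro m hzm
      have e : w m = fun ω => z m ω + β m • (z0 - z m ω)
          - ((1 - β m) * α m) • (F (z m ω) + ξ (2 * m) ω) := funext (hw m)
      rw [e]
      exact (hzm.add (((memLp_const z0).sub hzm).const_smul (β m))).sub
        (((hFL2 _ hzm).add (hξ2 (2 * m))).const_smul ((1 - β m) * α m))
    intro m
    induction m with
    | zero =>
      have e : z 0 = fun _ => z0 := funext hz0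
      have h0 : MemLp (z 0) 2 μ := by rw [e]; exact memLp_const z0
      exact ⟨h0, hwstep 0 h0⟩
    | succ n ih =>
      have e : z (n + 1) = fun ω => z n ω + β n • (z0 - z n ω)
          - α n • (F (w n ω) + ξ (2 * n + 1) ω) := funext (hz n)
      have h1 : MemLp (z (n + 1)) 2 μ := by
        rw [e]
        exact (ih.1.add (((memLp_const z0).sub ih.1).const_smul (β n))).sub
          (((hFL2 _ ih.2).add (hξ2 (2 * n + 1))).const_smul (α n))
      exact ⟨h1, hwstep (n + 1) h1⟩
  -- representation by noises
  have hrep : ∀ m, SfegNoiseRep ξ (2 * m) (z m) ∧ SfegNoiseRep ξ (2 * m + 1) (w m) := by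
    have hwstep : ∀ m, SfegNoiseRep ξ (2 * m) (z m) → SfegNoiseRep ξ (2 * m + 1) (w m) := by
      intro m hzm
      have h1 : SfegNoiseRep ξ (2 * m + 1) (z m) := hzm.mono (by omega)
      exact ((h1.add (((SfegNoiseRep.const z0).sub h1).smul (β m))).sub
        (((h1.comp hFmeas).add (SfegNoiseRep.noise (2 * m) (by omega))).smul
          ((1 - β m) * α m))).congr' (hw m)
    intro m
    induction m with
    | zero =>
      have h0 : SfegNoiseRep ξ (2 * 0) (z 0) := (SfegNoiseRep.const z0).congr' hz0
      exact ⟨h0, hwstep 0 h0⟩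
    | succ n ih =>
      have h1 : SfegNoiseRep ξ (2 * (n + 1)) (z n) := ih.1.mono (by omega)
      have h2 : SfegNoiseRep ξ (2 * (n + 1)) (w n) := ih.2.mono (by omega)
      have h3 : SfegNoiseRep ξ (2 * (n + 1)) (z (n + 1)) :=
        ((h1.add (((SfegNoiseRep.const z0).sub h1).smul (β n))).sub
          (((h2.comp hFmeas).add (SfegNoiseRep.noise (2 * n + 1) (by omega))).smul
            (α n))).congr' (hz n)
      exact ⟨h3, hwstep (n + 1) h3⟩
  -- positivity of b
  have hbpos : ∀ m, 1 ≤ m → 0 < b m := by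
    have h : ∀ m, 0 < b (m + 1) := by
      intro m
      induction m with
      | zero => rw [hb1]; norm_num
      | succ n ih =>
        rw [hb (n + 1) (by omega)]
        have hβn := hβ (n + 1) (by omega)
        exact div_pos ih (by linarith [hβn.2])
    intro m hm
    obtain ⟨n, rfl⟩ : ∃ n, m = n + 1 := ⟨m - 1, by omega⟩
    exact h n
  intro k hk
  obtain ⟨hβ1, hβ2⟩ := hβ k hk
  obtain ⟨hα1, hα2⟩ := hα k hk
  have hlam : 0 < 1 - β k := by linarith
  have hlam0 : (1 - β k) ≠ 0 := ne_of_gt hlam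
  have hβk0 : β k ≠ 0 := ne_of_gt hβ1
  have hLα : L * α k ≤ 1 := by
    rw [mul_comm]; exact (le_div_iff₀ hL).mp hα2
  have hbk := hbpos k hk
  -- coefficient inequality for a (k+1)
  have haa' : a (k + 1) ≤ b k * α k / β k / (2 * (1 - β k)) := by
    rw [ha (k + 1) (by omega), hb k hk]
    have h1 := hcoef k
    have hbk1 : (0:ℝ) ≤ b k / (1 - β k) := le_of_lt (div_pos hbk hlam)
    calc b k / (1 - β k) * (1 - β (k + 1)) * α (k + 1) / (2 * β (k + 1))
        = (b k / (1 - β k)) * ((1 - β (k + 1)) * α (k + 1) / (2 * β (k + 1))) := by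
          ring
      _ ≤ (b k / (1 - β k)) * (α k / (2 * β k)) :=
          mul_le_mul_of_nonneg_left h1 hbk1
      _ = b k * α k / β k / (2 * (1 - β k)) := by
          field_simp
  -- L² objects
  have hzk2 : MemLp (z k) 2 μ := (hzw2 k).1
  have hwk2 : MemLp (w k) 2 μ := (hzw2 k).2
  have hzk12 : MemLp (z (k + 1)) 2 μ := (hzw2 (k + 1)).1
  have hgz : MemLp (fun ω => F (z k ω)) 2 μ := hFL2 _ hzk2
  have hgw : MemLp (fun ω => F (w k ω)) 2 μ := hFL2 _ hwk2
  have hgz1 : MemLp (fun ω => F (z (k + 1) ω)) 2 μ := hFL2 _ hzk12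
  have hwb2 : MemLp (fun ω => z k ω + β k • (z0 - z k ω)
      - ((1 - β k) * α k) • F (z k ω)) 2 μ :=
    (hzk2.add (((memLp_const z0).sub hzk2).const_smul (β k))).sub
      (hgz.const_smul ((1 - β k) * α k))
  have hzb2 : MemLp (fun ω => z k ω + β k • (z0 - z k ω)
      - α k • F (w k ω)) 2 μ :=
    (hzk2.add (((memLp_const z0).sub hzk2).const_smul (β k))).sub
      (hgw.const_smul (α k))
  have hFwb : MemLp (fun ω => F (z k ω + β k • (z0 - z k ω)
      - ((1 - β k) * α k) • F (z k ω))) 2 μ := hFL2 _ hwb2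
  have hFzb : MemLp (fun ω => F (z k ω + β k • (z0 - z k ω)
      - α k • F (w k ω))) 2 μ := hFL2 _ hzb2
  have hXdiff : MemLp (fun ω => (1 - β k) • ξ (2 * k) ω - ξ (2 * k + 1) ω) 2 μ :=
    ((hξ2 (2 * k)).const_smul (1 - β k)).sub (hξ2 (2 * k + 1))
  -- representations
  have hzrep : SfegNoiseRep ξ (2 * k) (z k) := (hrep k).1
  have hwrep : SfegNoiseRep ξ (2 * k + 1) (w k) := (hrep k).2
  have hgzrep : SfegNoiseRep ξ (2 * k) (fun ω => F (z k ω)) := hzrep.comp hFmeas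
  have hwbrep : SfegNoiseRep ξ (2 * k) (fun ω => F (z k ω + β k • (z0 - z k ω)
      - ((1 - β k) * α k) • F (z k ω))) :=
    (((hzrep.add (((SfegNoiseRep.const z0).sub hzrep).smul (β k))).sub
      ((hzrep.comp hFmeas).smul ((1 - β k) * α k))).comp hFmeas).congr' (fun ω => rfl)
  have hgwrep : SfegNoiseRep ξ (2 * k + 1) (fun ω => F (w k ω)) := hwrep.comp hFmeas
  have hzbrep : SfegNoiseRep ξ (2 * k + 1) (fun ω => F (z k ω + β k • (z0 - z k ω)
      - α k • F (w k ω))) := by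
    have h1 : SfegNoiseRep ξ (2 * k + 1) (z k) := hzrep.mono (by omega)
    exact (((h1.add (((SfegNoiseRep.const z0).sub h1).smul (β k))).sub
      ((hwrep.comp hFmeas).smul (α k))).comp hFmeas).congr' (fun ω => rfl)
  -- vanishing expectations
  have hzero1 : ∫ ω, ⟪F (z k ω), ξ (2 * k) ω⟫ ∂μ = 0 :=
    sfeg_integral_inner_eq_zero (hgzrep.indepFun hindep hmeas le_rfl) hgz
      (hξ2 (2 * k)) (hmean (2 * k))
  have hzero2 : ∫ ω, ⟪F (z k ω + β k • (z0 - z k ω)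
      - ((1 - β k) * α k) • F (z k ω)), ξ (2 * k) ω⟫ ∂μ = 0 :=
    sfeg_integral_inner_eq_zero (hwbrep.indepFun hindep hmeas le_rfl) hFwb
      (hξ2 (2 * k)) (hmean (2 * k))
  have hzero3 : ∫ ω, ⟪F (w k ω), ξ (2 * k + 1) ω⟫ ∂μ = 0 :=
    sfeg_integral_inner_eq_zero (hgwrep.indepFun hindep hmeas le_rfl) hgw
      (hξ2 (2 * k + 1)) (hmean (2 * k + 1))
  have hzero4 : ∫ ω, ⟪F (z k ω + β k • (z0 - z k ω)
      - α k • F (w k ω)), ξ (2 * k + 1) ω⟫ ∂μ = 0 :=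
    sfeg_integral_inner_eq_zero (hzbrep.indepFun hindep hmeas le_rfl) hFzb
      (hξ2 (2 * k + 1)) (hmean (2 * k + 1))
  have hzero5 : ∫ ω, ⟪ξ (2 * k) ω, ξ (2 * k + 1) ω⟫ ∂μ = 0 :=
    sfeg_integral_inner_eq_zero (hindep.indepFun (by omega)) (hξ2 (2 * k))
      (hξ2 (2 * k + 1)) (hmean (2 * k + 1))
  -- integral of the squared norm of the combined noise
  have hNint : ∫ ω, ‖(1 - β k) • ξ (2 * k) ω - ξ (2 * k + 1) ω‖^2 ∂μ
      = (1 - β k)^2 * σsq (2 * k) + σsq (2 * k + 1) := by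
    have e : (fun ω => ‖(1 - β k) • ξ (2 * k) ω - ξ (2 * k + 1) ω‖^2)
        = fun ω => ((1 - β k)^2 * ‖ξ (2 * k) ω‖^2
            - 2 * (1 - β k) * ⟪ξ (2 * k) ω, ξ (2 * k + 1) ω⟫) + ‖ξ (2 * k + 1) ω‖^2 := by
      funext ω
      rw [norm_sub_sq_real, norm_smul, real_inner_smul_left, Real.norm_eq_abs,
        abs_of_pos hlam, mul_pow]
      ring
    have j1 : Integrable (fun ω => (1 - β k)^2 * ‖ξ (2 * k) ω‖^2) μ :=
      (hint (2 * k)).const_mul ((1 - β k)^2)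
    have j2 : Integrable (fun ω => 2 * (1 - β k) * ⟪ξ (2 * k) ω, ξ (2 * k + 1) ω⟫) μ :=
      (sfeg_integrable_inner (hξ2 (2 * k)) (hξ2 (2 * k + 1))).const_mul (2 * (1 - β k))
    have j12 : Integrable (fun ω => (1 - β k)^2 * ‖ξ (2 * k) ω‖^2
        - 2 * (1 - β k) * ⟪ξ (2 * k) ω, ξ (2 * k + 1) ω⟫) μ := j1.sub j2
    rw [e, integral_add j12 (hint (2 * k + 1)), integral_sub j1 j2,
      integral_const_mul, integral_const_mul, hvar, hvar, hzero5]
    ring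
  -- integrable summands
  have i1 : Integrable (fun ω => (-(1/(2*(1 - β k))))
      * ‖(1 - β k) • ξ (2 * k) ω - ξ (2 * k + 1) ω‖^2) μ :=
    ((memLp_two_iff_integrable_sq_norm hXdiff.1).1 hXdiff).const_mul _
  have i2 : Integrable (fun ω => (-(L*(1 - β k)*α k)) * ‖ξ (2 * k) ω‖^2) μ :=
    (hint (2 * k)).const_mul _
  have i3 : Integrable (fun ω => (-(L*α k/(1 - β k))) * ‖ξ (2 * k + 1) ω‖^2) μ :=
    (hint (2 * k + 1)).const_mul _
  have i4 : Integrable (fun ω => (-(1 - β k)) * ⟪F (z k ω), ξ (2 * k) ω⟫) μ :=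
    (sfeg_integrable_inner hgz (hξ2 (2 * k))).const_mul _
  have i5 : Integrable (fun ω => ⟪F (z k ω + β k • (z0 - z k ω)
      - ((1 - β k) * α k) • F (z k ω)), ξ (2 * k) ω⟫) μ :=
    sfeg_integrable_inner hFwb (hξ2 (2 * k))
  have i6 : Integrable (fun ω => (-(1/(1 - β k))) * ⟪F (w k ω), ξ (2 * k + 1) ω⟫) μ :=
    (sfeg_integrable_inner hgw (hξ2 (2 * k + 1))).const_mul _
  have i7 : Integrable (fun ω => (1/(1 - β k)) * ⟪F (z k ω + β k • (z0 - z k ω)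
      - α k • F (w k ω)), ξ (2 * k + 1) ω⟫) μ :=
    (sfeg_integrable_inner hFzb (hξ2 (2 * k + 1))).const_mul _
  -- potentials are integrable
  have hVk : Integrable (fun ω => a k * ‖F (z k ω)‖ ^ 2
      - b k * ⟪F (z k ω), z0 - z k ω⟫) μ :=
    (((memLp_two_iff_integrable_sq_norm hgz.1).1 hgz).const_mul (a k)).sub
      ((sfeg_integrable_inner hgz ((memLp_const z0).sub hzk2)).const_mul (b k))
  have hVk1 : Integrable (fun ω => a (k + 1) * ‖F (z (k + 1) ω)‖ ^ 2
      - b (k + 1) * ⟪F (z (k + 1) ω), z0 - z (k + 1) ω⟫) μ :=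
    (((memLp_two_iff_integrable_sq_norm hgz1.1).1 hgz1).const_mul (a (k + 1))).sub
      ((sfeg_integrable_inner hgz1 ((memLp_const z0).sub hzk12)).const_mul (b (k + 1)))
  -- pointwise inequality
  have pointw : ∀ ω, b k * α k / β k *
      ( (-(1/(2*(1 - β k)))) * ‖(1 - β k) • ξ (2 * k) ω - ξ (2 * k + 1) ω‖^2
        + (-(L*(1 - β k)*α k)) * ‖ξ (2 * k) ω‖^2
        + (-(L*α k/(1 - β k))) * ‖ξ (2 * k + 1) ω‖^2
        + (-(1 - β k)) * ⟪F (z k ω), ξ (2 * k) ω⟫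
        + ⟪F (z k ω + β k • (z0 - z k ω) - ((1 - β k)*α k) • F (z k ω)), ξ (2 * k) ω⟫
        + (-(1/(1 - β k))) * ⟪F (w k ω), ξ (2 * k + 1) ω⟫
        + (1/(1 - β k)) * ⟪F (z k ω + β k • (z0 - z k ω) - α k • F (w k ω)),
            ξ (2 * k + 1) ω⟫ )
      ≤ (a k * ‖F (z k ω)‖ ^ 2 - b k * ⟪F (z k ω), z0 - z k ω⟫)
        - (a (k + 1) * ‖F (z (k + 1) ω)‖ ^ 2
            - b (k + 1) * ⟪F (z (k + 1) ω), z0 - z (k + 1) ω⟫) := by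
    intro ω
    exact sfeg_pointwise F L hLip hMono (α k) (β k) (a k) (a (k + 1)) (b k) (b (k + 1))
      hα1 hLα hβ1 hβ2 hbk (hb k hk) (ha k hk) haa'
      z0 (z k ω) (w k ω) (z (k + 1) ω) (ξ (2 * k) ω) (ξ (2 * k + 1) ω)
      (hw k ω) (hz k ω)
  -- value of the lower-bound integral
  have hIfull : ∫ ω, (b k * α k / β k *
      ( (-(1/(2*(1 - β k)))) * ‖(1 - β k) • ξ (2 * k) ω - ξ (2 * k + 1) ω‖^2
        + (-(L*(1 - β k)*α k)) * ‖ξ (2 * k) ω‖^2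
        + (-(L*α k/(1 - β k))) * ‖ξ (2 * k + 1) ω‖^2
        + (-(1 - β k)) * ⟪F (z k ω), ξ (2 * k) ω⟫
        + ⟪F (z k ω + β k • (z0 - z k ω) - ((1 - β k)*α k) • F (z k ω)), ξ (2 * k) ω⟫
        + (-(1/(1 - β k))) * ⟪F (w k ω), ξ (2 * k + 1) ω⟫
        + (1/(1 - β k)) * ⟪F (z k ω + β k • (z0 - z k ω) - α k • F (w k ω)),
            ξ (2 * k + 1) ω⟫ )) ∂μ
      = b k * α k / β k *
        ( (-(1/(2*(1 - β k)))) * ((1 - β k)^2 * σsq (2 * k) + σsq (2 * k + 1))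
          + (-(L*(1 - β k)*α k)) * σsq (2 * k)
          + (-(L*α k/(1 - β k))) * σsq (2 * k + 1) ) := by
    rw [integral_const_mul, sfeg_integral_add7 i1 i2 i3 i4 i5 i6 i7,
      integral_const_mul, integral_const_mul, integral_const_mul, integral_const_mul,
      integral_const_mul, integral_const_mul,
      hNint, hvar, hvar, hzero1, hzero2, hzero3, hzero4]
    ring
  -- put everything together
  calc -(b k * α k * (1 + 2 * L * α k) / (2 * β k))
          * ((1 - β k) * σsq (2 * k) + σsq (2 * k + 1) / (1 - β k))
      = b k * α k / β k *
        ( (-(1/(2*(1 - β k)))) * ((1 - β k)^2 * σsq (2 * k) + σsq (2 * k + 1))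
          + (-(L*(1 - β k)*α k)) * σsq (2 * k)
          + (-(L*α k/(1 - β k))) * σsq (2 * k + 1) ) := by
        field_simp
        ring
    _ = ∫ ω, (b k * α k / β k *
      ( (-(1/(2*(1 - β k)))) * ‖(1 - β k) • ξ (2 * k) ω - ξ (2 * k + 1) ω‖^2
        + (-(L*(1 - β k)*α k)) * ‖ξ (2 * k) ω‖^2
        + (-(L*α k/(1 - β k))) * ‖ξ (2 * k + 1) ω‖^2
        + (-(1 - β k)) * ⟪F (z k ω), ξ (2 * k) ω⟫
        + ⟪F (z k ω + β k • (z0 - z k ω) - ((1 - β k)*α k) • F (z k ω)), ξ (2 * k) ω⟫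
        + (-(1/(1 - β k))) * ⟪F (w k ω), ξ (2 * k + 1) ω⟫
        + (1/(1 - β k)) * ⟪F (z k ω + β k • (z0 - z k ω) - α k • F (w k ω)),
            ξ (2 * k + 1) ω⟫ )) ∂μ := hIfull.symm
    _ ≤ ∫ ω, ((a k * ‖F (z k ω)‖ ^ 2 - b k * ⟪F (z k ω), z0 - z k ω⟫)
        - (a (k + 1) * ‖F (z (k + 1) ω)‖ ^ 2
            - b (k + 1) * ⟪F (z (k + 1) ω), z0 - z (k + 1) ω⟫)) ∂μ := by
        refine integral_mono ?_ ?_ (fun ω => pointw ω)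
        · exact Integrable.const_mul
            (show Integrable _ μ from
              ((((((i1.add i2).add i3).add i4).add i5).add i6).add i7)) _
        · exact hVk.sub hVk1
    _ = _ := integral_sub hVk hVk1
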